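/- The geometric measure of entanglement of the antisymmetric subspace A ⊂ C^d ⊗ C^d equals 1/2: every unit vector ψ in the antisymmetric subspace has largest squared Schmidt coefficient at most 1/2, and this bound is attained. -/

import Mathlib

/-- Partial trace over the second tensor factor. -/
noncomputable def ptrace₂ {a b : Type*} [Fintype b] (ρ : Matrix (a × b) (a × b) ℂ) :
    Matrix a a ℂ := Matrix.of fun i j => ∑ k, ρ (i, k) (j, k)

/-- Rank-one projector `|ψ⟩⟨ψ|`. -/
def proj {m : Type*} (ψ : m → ℂ) : Matrix m m ℂ := Matrix.of fun i j => ψ i * star (ψ j)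

/-- Largest eigenvalue of a Hermitian matrix, as the supremum of its quadratic form
over unit vectors. -/
noncomputable def lmax {m : Type*} [Fintype m] (ρ : Matrix m m ℂ) : ℝ :=
  sSup {r : ℝ | ∃ v : m → ℂ, (∑ i, Complex.normSq (v i)) = 1 ∧
    r = (dotProduct (star v) (ρ.mulVec v)).re}


open Finset Complex in
private lemma stmt11_t_zero {ι : Type*} [Fintype ι] (a : ι → ι → ℂ)
    (hanti : ∀ i j, a j i = -a i j) (v : ι → ℂ) :
    ∑ i, (starRingEnd ℂ) (v i) * (∑ j, (starRingEnd ℂ) (v j) * a j i) = 0 := by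
  set t := ∑ i, (starRingEnd ℂ) (v i) * (∑ j, (starRingEnd ℂ) (v j) * a j i) with ht
  have h1 : t = ∑ i, ∑ j, (starRingEnd ℂ) (v i) * ((starRingEnd ℂ) (v j) * a j i) := by
    rw [ht]; simp [Finset.mul_sum]
  have h2 : t = -t := by
    calc t = ∑ i, ∑ j, (starRingEnd ℂ) (v i) * ((starRingEnd ℂ) (v j) * a j i) := h1
    _ = ∑ j, ∑ i, (starRingEnd ℂ) (v i) * ((starRingEnd ℂ) (v j) * a j i) := Finset.sum_comm
    _ = ∑ j, ∑ i, -((starRingEnd ℂ) (v j) * ((starRingEnd ℂ) (v i) * a i j)) := by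
        apply Finset.sum_congr rfl; intro j _; apply Finset.sum_congr rfl; intro i _
        rw [hanti i j]; ring
    _ = -t := by rw [h1]; simp
  have : (2:ℂ) * t = 0 := by linear_combination h2
  simpa using this

open Finset Complex in
private lemma stmt11_key {ι : Type*} [Fintype ι] (a : ι → ι → ℂ)
    (hanti : ∀ i j, a j i = -a i j)
    (hnorm : ∑ i, ∑ j, Complex.normSq (a i j) = 1)
    (v : ι → ℂ) (hv : ∑ i, Complex.normSq (v i) = 1) :
    ∑ k, Complex.normSq (∑ i, (starRingEnd ℂ) (v i) * a i k) ≤ 1 / 2 := by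
  set C := starRingEnd ℂ with hC
  have sumc : ∀ {f g : ι → ℂ}, (∀ i, f i = g i) → ∑ i, f i = ∑ i, g i :=
    fun h => Finset.sum_congr rfl (fun i _ => h i)
  set w : ι → ℂ := fun k => ∑ i, C (v i) * a i k with hw
  set c : ℝ := ∑ k, Complex.normSq (w k) with hc
  have hwneg : ∀ i, ∑ k, C (v k) * a i k = -w i := by
    intro i
    rw [hw]
    simp only [← Finset.sum_neg_distrib]
    apply Finset.sum_congr rfl; intro k _; rw [hanti k i]; ring
  have hwCa : ∀ k, ∑ i, v i * C (a i k) = C (w k) := by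
    intro k
    rw [hw]; simp only [map_sum, map_mul, RingHomCompTriple.comp_apply]
    apply sumc; intro i; simp [hC]
  have ht : ∑ i, C (v i) * w i = 0 := stmt11_t_zero a hanti v
  have ht' : ∑ i, v i * C (w i) = 0 := by
    have := congrArg (starRingEnd ℂ) ht
    simpa [map_sum, mul_comm] using this
  have hvC : ∑ i, v i * C (v i) = (1:ℂ) := by
    rw [sumc (fun i => Complex.mul_conj (v i)), ← Complex.ofReal_sum]
    exact_mod_cast congrArg (Complex.ofReal) hv
  have hwC : ∑ k, w k * C (w k) = (c : ℂ) := by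
    rw [sumc (fun k => Complex.mul_conj (w k)), ← Complex.ofReal_sum]
  have hexp : ∑ i, ∑ k,
      (Complex.normSq (a i k - v i * w k + w i * v k) : ℝ) = 1 - 2 * c := by
    have hT : (∑ i, ∑ k,
        ((a i k - v i * w k + w i * v k) * C (a i k - v i * w k + w i * v k)))
        = (1 : ℂ) - 2 * (c : ℂ) := by
      have hpt : ∀ i k, (a i k - v i * w k + w i * v k) * C (a i k - v i * w k + w i * v k) =
          a i k * C (a i k)
          - C (v i) * (C (w k) * a i k)
          + C (w i) * (C (v k) * a i k)
          - v i * (w k * C (a i k))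
          + (v i * C (v i)) * (w k * C (w k))
          - (v i * C (w i)) * (w k * C (v k))
          + w i * (v k * C (a i k))
          - (w i * C (v i)) * (v k * C (w k))
          + (w i * C (w i)) * (v k * C (v k)) := by
        intro i k
        simp only [hC, map_sub, map_add, map_mul]
        ring
      simp only [hpt, Finset.sum_add_distrib, Finset.sum_sub_distrib]
      have S1 : ∑ i, ∑ k, a i k * C (a i k) = (1:ℂ) := by
        rw [sumc (fun i => sumc (fun k => Complex.mul_conj (a i k)))]
        simp only [← Complex.ofReal_sum]
        exact_mod_cast congrArg Complex.ofReal hnorm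
      have S2 : ∑ i, ∑ k, C (v i) * (C (w k) * a i k) = (c:ℂ) := by
        rw [Finset.sum_comm, ← hwC]
        apply sumc; intro k
        calc ∑ i, C (v i) * (C (w k) * a i k) = ∑ i, (C (v i) * a i k) * C (w k) := by
              apply sumc; intro i; ring
        _ = (∑ i, C (v i) * a i k) * C (w k) := by rw [Finset.sum_mul]
        _ = w k * C (w k) := rfl
      have S3 : ∑ i, ∑ k, C (w i) * (C (v k) * a i k) = -(c:ℂ) := by
        rw [show -(c:ℂ) = -∑ i, w i * C (w i) from by rw [hwC]]
        rw [← Finset.sum_neg_distrib]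
        apply sumc; intro i
        rw [← Finset.mul_sum, hwneg i]; ring
      have S4 : ∑ i, ∑ k, v i * (w k * C (a i k)) = (c:ℂ) := by
        rw [Finset.sum_comm, ← hwC]
        apply sumc; intro k
        calc ∑ i, v i * (w k * C (a i k)) = ∑ i, w k * (v i * C (a i k)) := by
              apply sumc; intro i; ring
        _ = w k * ∑ i, v i * C (a i k) := by rw [Finset.mul_sum]
        _ = w k * C (w k) := by rw [hwCa]
      have S5 : ∑ i, ∑ k, (v i * C (v i)) * (w k * C (w k)) = (c:ℂ) := by
        rw [sumc (fun i => (Finset.mul_sum _ _ _).symm), ← Finset.sum_mul, hvC, hwC, one_mul]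
      have S6 : ∑ i, ∑ k, (v i * C (w i)) * (w k * C (v k)) = 0 := by
        rw [sumc (fun i => (Finset.mul_sum _ _ _).symm), ← Finset.sum_mul, ht', zero_mul]
      have S7 : ∑ i, ∑ k, w i * (v k * C (a i k)) = -(c:ℂ) := by
        rw [show -(c:ℂ) = -∑ i, w i * C (w i) from by rw [hwC]]
        rw [← Finset.sum_neg_distrib]
        apply sumc; intro i
        rw [← Finset.mul_sum]
        have : ∑ k, v k * C (a i k) = -C (w i) := by
          have := congrArg (starRingEnd ℂ) (hwneg i)
          simp only [map_sum, map_mul, map_neg, RingHomCompTriple.comp_apply] at this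
          rw [← this]; apply sumc; intro k; simp [hC]
        rw [this]; ring
      have S8 : ∑ i, ∑ k, (w i * C (v i)) * (v k * C (w k)) = 0 := by
        have h : ∑ i, w i * C (v i) = 0 := by
          rw [← ht]; apply sumc; intro i; ring
        rw [sumc (fun i => (Finset.mul_sum _ _ _).symm), ← Finset.sum_mul, h, zero_mul]
      have S9 : ∑ i, ∑ k, (w i * C (w i)) * (v k * C (v k)) = (c:ℂ) := by
        rw [sumc (fun i => (Finset.mul_sum _ _ _).symm), ← Finset.sum_mul, hvC, hwC, mul_one]
      rw [S1, S2, S3, S4, S5, S6, S7, S8, S9]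
      ring
    have hT2 : (∑ i, ∑ k,
        ((a i k - v i * w k + w i * v k) * C (a i k - v i * w k + w i * v k)))
        = ((∑ i, ∑ k, (Complex.normSq (a i k - v i * w k + w i * v k) : ℝ) : ℝ) : ℂ) := by
      rw [sumc (fun i => sumc (fun k => Complex.mul_conj _))]
      push_cast
      rfl
    rw [hT2] at hT
    exact_mod_cast hT
  have hpos : (0:ℝ) ≤ 1 - 2 * c := by
    rw [← hexp]
    apply Finset.sum_nonneg; intro i _
    apply Finset.sum_nonneg; intro k _
    exact Complex.normSq_nonneg _
  rw [hc] at hpos ⊢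
  linarith

open Finset Complex in
private lemma stmt11_quad {d : ℕ} (ψ : Fin d × Fin d → ℂ) (v : Fin d → ℂ) :
    (dotProduct (star v) ((ptrace₂ (proj ψ)).mulVec v)).re
      = ∑ k, Complex.normSq (∑ i, (starRingEnd ℂ) (v i) * ψ (i, k)) := by
  have sumc : ∀ {κ : Type} [Fintype κ] {f g : κ → ℂ}, (∀ i, f i = g i) → ∑ i, f i = ∑ i, g i :=
    fun h => Finset.sum_congr rfl (fun i _ => h i)
  set C := starRingEnd ℂ with hC
  have h : dotProduct (star v) ((ptrace₂ (proj ψ)).mulVec v)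
      = ∑ k, ((∑ i, C (v i) * ψ (i, k)) * C (∑ i, C (v i) * ψ (i, k))) := by
    calc dotProduct (star v) ((ptrace₂ (proj ψ)).mulVec v)
        = ∑ i, ∑ j, ∑ k, C (v i) * ψ (i,k) * (C (ψ (j,k)) * v j) := by
          simp only [dotProduct, Matrix.mulVec, ptrace₂, proj, Matrix.of_apply,
            Pi.star_apply, Complex.star_def, Finset.mul_sum, Finset.sum_mul, hC]
          apply sumc; intro i; apply sumc; intro j; apply sumc; intro k; ring
      _ = ∑ i, ∑ k, ∑ j, C (v i) * ψ (i,k) * (C (ψ (j,k)) * v j) := by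
          apply sumc; intro i; exact Finset.sum_comm
      _ = ∑ k, ∑ i, ∑ j, C (v i) * ψ (i,k) * (C (ψ (j,k)) * v j) := Finset.sum_comm
      _ = ∑ k, ((∑ i, C (v i) * ψ (i, k)) * (∑ j, C (ψ (j,k)) * v j)) := by
          apply sumc; intro k
          rw [Finset.sum_mul_sum]
      _ = ∑ k, ((∑ i, C (v i) * ψ (i, k)) * C (∑ i, C (v i) * ψ (i, k))) := by
          apply sumc; intro k
          congr 1
          rw [map_sum]
          apply sumc; intro j
          simp [hC, mul_comm]
  rw [h]
  have : ∑ k, ((∑ i, C (v i) * ψ (i, k)) * C (∑ i, C (v i) * ψ (i, k)))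
      = ((∑ k, Complex.normSq (∑ i, C (v i) * ψ (i, k)) : ℝ) : ℂ) := by
    rw [sumc (fun k => Complex.mul_conj _)]
    push_cast; rfl
  rw [this, Complex.ofReal_re]

private lemma stmt11_swap_mulVec {d : ℕ} (SWAP : Matrix (Fin d × Fin d) (Fin d × Fin d) ℂ)
    (hSWAP : SWAP = Matrix.of fun p q => if p.1 = q.2 ∧ p.2 = q.1 then 1 else 0)
    (ψ : Fin d × Fin d → ℂ) (i j : Fin d) :
    SWAP.mulVec ψ (i, j) = ψ (j, i) := by
  rw [hSWAP]
  simp only [Matrix.mulVec, dotProduct, Matrix.of_apply, Fintype.sum_prod_type]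
  rw [Finset.sum_eq_single j]
  · rw [Finset.sum_eq_single i]
    · simp
    · intro b _ hb; simp [hb.symm]
    · simp
  · intro a _ ha
    apply Finset.sum_eq_zero; intro b _
    simp [ha.symm]
  · simp

private lemma stmt11_swap_anti {d : ℕ} (SWAP : Matrix (Fin d × Fin d) (Fin d × Fin d) ℂ)
    (hSWAP : SWAP = Matrix.of fun p q => if p.1 = q.2 ∧ p.2 = q.1 then 1 else 0)
    (ψ : Fin d × Fin d → ℂ) (h : SWAP.mulVec ψ = -ψ) :
    ∀ i j, ψ (j, i) = -ψ (i, j) := by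
  intro i j
  have h2 := congrFun h (i, j)
  rw [stmt11_swap_mulVec SWAP hSWAP ψ i j] at h2
  simpa using h2

private noncomputable def stmt11c₀ : ℝ := (Real.sqrt 2)⁻¹

private lemma stmt11c₀_sq : stmt11c₀ * stmt11c₀ = 1 / 2 := by
  rw [stmt11c₀, ← mul_inv, Real.mul_self_sqrt (by norm_num)]
  norm_num

/-- The geometric measure of the antisymmetric subspace of `ℂ^d ⊗ ℂ^d` equals `1/2`:
every unit antisymmetric vector has largest squared Schmidt coefficient at most `1/2`,
and this bound is attained. -/
theorem stmt11 (d : ℕ) (hd : 2 ≤ d)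
    (SWAP : Matrix (Fin d × Fin d) (Fin d × Fin d) ℂ)
    (hSWAP : SWAP = Matrix.of fun p q => if p.1 = q.2 ∧ p.2 = q.1 then 1 else 0) :
    (∀ ψ : Fin d × Fin d → ℂ, SWAP.mulVec ψ = -ψ →
      (∑ p, Complex.normSq (ψ p)) = 1 → lmax (ptrace₂ (proj ψ)) ≤ 1 / 2) ∧
    (∃ ψ : Fin d × Fin d → ℂ, SWAP.mulVec ψ = -ψ ∧
      (∑ p, Complex.normSq (ψ p)) = 1 ∧ lmax (ptrace₂ (proj ψ)) = 1 / 2) := by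
  have hub : ∀ ψ : Fin d × Fin d → ℂ, SWAP.mulVec ψ = -ψ →
      (∑ p, Complex.normSq (ψ p)) = 1 →
      ∀ r ∈ {r : ℝ | ∃ v : Fin d → ℂ, (∑ i, Complex.normSq (v i)) = 1 ∧
        r = (dotProduct (star v) ((ptrace₂ (proj ψ)).mulVec v)).re}, r ≤ 1 / 2 := by
    intro ψ hs hn r hr
    obtain ⟨v, hv, rfl⟩ := hr
    rw [stmt11_quad]
    refine stmt11_key (fun i j => ψ (i, j))
      (fun i j => stmt11_swap_anti SWAP hSWAP ψ hs i j) ?_ v hv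
    rw [Fintype.sum_prod_type] at hn
    exact hn
  have part1 : ∀ ψ : Fin d × Fin d → ℂ, SWAP.mulVec ψ = -ψ →
      (∑ p, Complex.normSq (ψ p)) = 1 → lmax (ptrace₂ (proj ψ)) ≤ 1 / 2 := by
    intro ψ hs hn
    unfold lmax
    exact Real.sSup_le (hub ψ hs hn) (by norm_num)
  refine ⟨part1, ?_⟩
  set z : Fin d := ⟨0, by omega⟩ with hz
  set o : Fin d := ⟨1, by omega⟩ with ho
  have hzo : z ≠ o := by simp [hz, ho, Fin.ext_iff]
  set ψ : Fin d × Fin d → ℂ := fun p =>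
    if p = (z, o) then (stmt11c₀ : ℂ) else if p = (o, z) then -(stmt11c₀ : ℂ) else 0 with hψ
  have hanti : ∀ i j, ψ (j, i) = -ψ (i, j) := by
    intro i j
    by_cases h1 : (i, j) = (z, o)
    · simp only [Prod.mk.injEq] at h1
      obtain ⟨rfl, rfl⟩ := h1
      simp [hψ, hzo, Ne.symm hzo, Prod.ext_iff]
    · by_cases h2 : (i, j) = (o, z)
      · simp only [Prod.mk.injEq] at h2
        obtain ⟨rfl, rfl⟩ := h2
        simp [hψ, hzo, Ne.symm hzo, Prod.ext_iff]
      · rw [Prod.ext_iff, not_and_or] at h1 h2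
        have : ψ (j, i) = 0 := by
          rw [hψ]; simp only [Prod.ext_iff]
          rw [if_neg, if_neg]
          · tauto
          · tauto
        rw [this, hψ]; simp only [Prod.ext_iff]
        rw [if_neg, if_neg]
        · simp
        · tauto
        · tauto
  have hswapψ : SWAP.mulVec ψ = -ψ := by
    funext p
    rw [show p = (p.1, p.2) from rfl, stmt11_swap_mulVec SWAP hSWAP ψ p.1 p.2]
    rw [Pi.neg_apply]
    exact hanti p.1 p.2
  have hnorm : ∑ p, Complex.normSq (ψ p) = 1 := by
    have hpt : ∀ p, Complex.normSq (ψ p) =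
        (if p = (z, o) then (1/2 : ℝ) else 0) + (if p = (o, z) then (1/2 : ℝ) else 0) := by
      intro p
      by_cases h1 : p = (z, o)
      · have h2 : p ≠ (o, z) := by rw [h1]; simp [Prod.ext_iff, hzo]
        simp [hψ, h1, h2, hzo, Ne.symm hzo, Prod.ext_iff, Complex.normSq_ofReal, stmt11c₀_sq]
      · by_cases h2 : p = (o, z)
        · simp [hψ, h1, h2, hzo, Ne.symm hzo, Prod.ext_iff, Complex.normSq_ofReal, stmt11c₀_sq]
        · simp [hψ, h1, h2, hzo, Ne.symm hzo]
    simp only [hpt, Finset.sum_add_distrib, Finset.sum_ite_eq', Finset.mem_univ, if_true]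
    norm_num
  refine ⟨ψ, hswapψ, hnorm, ?_⟩
  set v : Fin d → ℂ := fun i => if i = z then 1 else 0 with hv
  have hvnorm : ∑ i, Complex.normSq (v i) = 1 := by
    have : ∀ i, Complex.normSq (v i) = if i = z then (1:ℝ) else 0 := by
      intro i; by_cases h : i = z <;> simp [hv, h]
    simp [this]
  have hval : ∑ k, Complex.normSq (∑ i, (starRingEnd ℂ) (v i) * ψ (i, k)) = 1 / 2 := by
    have hin : ∀ k, ∑ i, (starRingEnd ℂ) (v i) * ψ (i, k) = ψ (z, k) := by
      intro k
      rw [Finset.sum_eq_single z]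
      · simp [hv]
      · intro b _ hb; simp [hv, hb]
      · simp
    simp only [hin]
    have : ∀ k, Complex.normSq (ψ (z, k)) = if k = o then (1/2 : ℝ) else 0 := by
      intro k
      by_cases h : k = o
      · simp [hψ, h, Prod.ext_iff, hzo, Ne.symm hzo, Complex.normSq_ofReal, stmt11c₀_sq]
      · simp [hψ, Prod.ext_iff, h, hzo, Ne.symm hzo]
    simp [this]
  have hle := part1 ψ hswapψ hnorm
  have hge : 1 / 2 ≤ lmax (ptrace₂ (proj ψ)) := by
    unfold lmax
    apply le_csSup
    · exact ⟨1 / 2, fun r hr => hub ψ hswapψ hnorm r hr⟩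
    · exact ⟨v, hvnorm, by rw [stmt11_quad, hval]⟩
  linarith
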